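/- Let d = 2^ℓ and let ε, δ ∈ (0, 1/2). If m ≥ 4(log d + log(2/δ))/ε², then with probability at least 1 − δ over the random diagonal matrices, for all x, y ∈ ℝ^d, (1 − ε)·‖x − y‖ ≤ ‖h̃(x) − h̃(y)‖/√(md) ≤ (1 + ε)·‖x − y‖. -/

import Mathlib

open MeasureTheory ProbabilityTheory Real Matrix
open scoped ENNReal NNReal Classical

noncomputable section

/-- The Sylvester–Hadamard matrix of size `2^ℓ`: `H 0 = [1]`,
`H (ℓ+1) = [[H ℓ, H ℓ],[H ℓ, -H ℓ]]`. -/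
def Had : ∀ ℓ : ℕ, Matrix (Fin (2 ^ ℓ)) (Fin (2 ^ ℓ)) ℝ
  | 0 => 1
  | (ℓ + 1) =>
      Matrix.reindex (finSumFinEquiv.trans (finCongr (by rw [pow_succ, mul_two])))
        (finSumFinEquiv.trans (finCongr (by rw [pow_succ, mul_two])))
        (Matrix.fromBlocks (Had ℓ) (Had ℓ) (Had ℓ) (-(Had ℓ)))

/-- `rht ℓ m D z j k = (H_d D^j z)_k`, the `(j,k)` entry of the randomized Hadamard
transform of `z`, where `D j` records the diagonal entries of the diagonal matrix `D^j`. -/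
def rht (ℓ m : ℕ) (D : Fin m → Fin (2 ^ ℓ) → ℝ) (z : EuclideanSpace ℝ (Fin (2 ^ ℓ)))
    (j : Fin m) (k : Fin (2 ^ ℓ)) : ℝ :=
  (Had ℓ).mulVec (fun i => D j i * z i) k

/-- The joint law of the diagonal entries of `D^1, …, D^m`: i.i.d. standard Gaussians. -/
def diagMeasure (ℓ m : ℕ) : Measure (Fin m → Fin (2 ^ ℓ) → ℝ) :=
  Measure.pi fun _ => Measure.pi fun _ => gaussianReal 0 1


lemma had_orth (ℓ : ℕ) : (Had ℓ)ᵀ * Had ℓ = (2 ^ ℓ : ℝ) • 1 := by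
  induction ℓ with
  | zero => simp [Had]
  | succ ℓ ih =>
      rw [Had]
      simp only [Matrix.reindex_apply, Matrix.transpose_submatrix, Matrix.submatrix_mul_equiv]
      have key : (Matrix.fromBlocks (Had ℓ) (Had ℓ) (Had ℓ) (-(Had ℓ)))ᵀ *
          Matrix.fromBlocks (Had ℓ) (Had ℓ) (Had ℓ) (-(Had ℓ)) = ((2:ℝ) ^ (ℓ+1)) • 1 := by
        rw [Matrix.fromBlocks_transpose, Matrix.fromBlocks_multiply]
        have h1 : (Had ℓ)ᵀ * (Had ℓ) + (Had ℓ)ᵀ * (Had ℓ) = ((2:ℝ) ^ (ℓ+1)) • 1 := by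
          rw [ih, pow_succ]; module
        have h2 : (Had ℓ)ᵀ * (Had ℓ) + (Had ℓ)ᵀ * -(Had ℓ) = 0 := by
          rw [Matrix.mul_neg]; abel
        have h3 : (Had ℓ)ᵀ * (Had ℓ) + (-(Had ℓ))ᵀ * -(Had ℓ) = ((2:ℝ) ^ (ℓ+1)) • 1 := by
          rw [Matrix.transpose_neg, Matrix.neg_mul, Matrix.mul_neg, neg_neg, ih, pow_succ]; module
        have h4 : (Had ℓ)ᵀ * (Had ℓ) + (-(Had ℓ))ᵀ * (Had ℓ) = 0 := by
          rw [Matrix.transpose_neg, Matrix.neg_mul]; abel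
        rw [h1, h2, h3, h4]
        ext (i|i) (j|j) <;> simp [Matrix.one_apply]
      rw [key]
      simp [Matrix.submatrix_smul, Matrix.submatrix_one_equiv]
      exact Matrix.submatrix_one_equiv ((finCongr _).trans finSumFinEquiv.symm)

lemma sum_sq_mulVec (ℓ : ℕ) (v : Fin (2 ^ ℓ) → ℝ) :
    ∑ k, ((Had ℓ).mulVec v k) ^ 2 = 2 ^ ℓ * ∑ i, v i ^ 2 := by
  have h : ∑ k, ((Had ℓ).mulVec v k) ^ 2 = ((Had ℓ).mulVec v) ⬝ᵥ ((Had ℓ).mulVec v) := by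
    simp [dotProduct, sq]
  rw [h]
  have h2 : v ⬝ᵥ (((Had ℓ)ᵀ * Had ℓ).mulVec v)
      = ((Had ℓ).mulVec v) ⬝ᵥ ((Had ℓ).mulVec v) := by
    rw [← Matrix.mulVec_mulVec, Matrix.dotProduct_mulVec, Matrix.vecMul_transpose]
  rw [← h2, had_orth, Matrix.smul_mulVec, Matrix.one_mulVec, dotProduct_smul]
  simp [dotProduct, sq, mul_comm]

lemma gauss_density_eq (t : ℝ) (x : ℝ) :
    gaussianPDFReal 0 1 x * Real.exp (t * x ^ 2)
      = (Real.sqrt (2 * π))⁻¹ * Real.exp (-(1/2 - t) * x ^ 2) := by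
  rw [gaussianPDFReal]
  push_cast
  rw [mul_one, mul_assoc, ← Real.exp_add]
  ring_nf

lemma integrable_exp_mul_sq_gaussian {t : ℝ} (ht : t < 1/2) :
    Integrable (fun x => Real.exp (t * x ^ 2)) (gaussianReal 0 1) := by
  rw [gaussianReal_of_var_ne_zero _ one_ne_zero, gaussianPDF_def]
  have hf : Measurable (fun x => Real.toNNReal (gaussianPDFReal 0 1 x)) :=
    (measurable_gaussianPDFReal 0 1).real_toNNReal
  have : (fun x => ENNReal.ofReal (gaussianPDFReal 0 1 x))
      = fun x => ((Real.toNNReal (gaussianPDFReal 0 1 x) : ℝ≥0) : ℝ≥0∞) := by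
    ext x; simp [ENNReal.ofReal]
  rw [this, integrable_withDensity_iff_integrable_coe_smul hf]
  have : (fun x => ((Real.toNNReal (gaussianPDFReal 0 1 x) : ℝ≥0) : ℝ) • Real.exp (t * x ^ 2))
      = fun x => (Real.sqrt (2 * π))⁻¹ * Real.exp (-(1/2 - t) * x ^ 2) := by
    ext x
    rw [smul_eq_mul, Real.coe_toNNReal _ (gaussianPDFReal_nonneg 0 1 x), gauss_density_eq]
  rw [this]
  exact (integrable_exp_neg_mul_sq (by linarith)).const_mul _

lemma integral_exp_mul_sq_gaussian {t : ℝ} (ht : t < 1/2) :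
    ∫ x, Real.exp (t * x ^ 2) ∂(gaussianReal 0 1) = (Real.sqrt (1 - 2 * t))⁻¹ := by
  rw [gaussianReal_of_var_ne_zero _ one_ne_zero, gaussianPDF_def]
  have hf : Measurable (fun x => Real.toNNReal (gaussianPDFReal 0 1 x)) :=
    (measurable_gaussianPDFReal 0 1).real_toNNReal
  have h1 : (fun x => ENNReal.ofReal (gaussianPDFReal 0 1 x))
      = fun x => ((Real.toNNReal (gaussianPDFReal 0 1 x) : ℝ≥0) : ℝ≥0∞) := by
    ext x; simp [ENNReal.ofReal]
  rw [h1, integral_withDensity_eq_integral_smul hf]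
  have h2 : ∀ x, (Real.toNNReal (gaussianPDFReal 0 1 x) : ℝ≥0) • Real.exp (t * x ^ 2)
      = (Real.sqrt (2 * π))⁻¹ * Real.exp (-(1/2 - t) * x ^ 2) := by
    intro x
    rw [NNReal.smul_def, smul_eq_mul, Real.coe_toNNReal _ (gaussianPDFReal_nonneg 0 1 x),
      gauss_density_eq]
  simp_rw [h2]
  rw [integral_const_mul, integral_gaussian]
  have hb : (0:ℝ) < 1/2 - t := by linarith
  have h3 : (1:ℝ) - 2 * t = 2 * (1/2 - t) := by ring
  rw [Real.sqrt_div Real.pi_pos.le, h3, Real.sqrt_mul (by norm_num : (0:ℝ) ≤ 2),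
    Real.sqrt_mul (by norm_num : (0:ℝ) ≤ 2) (1/2 - t)]
  have hπ : Real.sqrt π ≠ 0 := by positivity
  have h2 : Real.sqrt 2 ≠ 0 := by positivity
  have hb' : Real.sqrt (1/2 - t) ≠ 0 := by positivity
  rw [mul_inv, mul_inv, div_eq_mul_inv]
  have hc : (Real.sqrt π)⁻¹ * Real.sqrt π = 1 := inv_mul_cancel₀ hπ
  calc (Real.sqrt 2)⁻¹ * (Real.sqrt π)⁻¹ * (Real.sqrt π * (Real.sqrt (1/2 - t))⁻¹)
      = (Real.sqrt 2)⁻¹ * ((Real.sqrt π)⁻¹ * Real.sqrt π) * (Real.sqrt (1/2 - t))⁻¹ := by ring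
    _ = (Real.sqrt 2)⁻¹ * (Real.sqrt (1/2 - t))⁻¹ := by rw [hc, mul_one]

variable {m d : ℕ}

lemma pi_exp_integral (t : ℝ) (i : Fin d)
    (hInt : Integrable (fun x => Real.exp (t * x ^ 2)) (gaussianReal 0 1)) :
    (∫ D : Fin m → Fin d → ℝ, Real.exp (t * ∑ j, (D j i) ^ 2)
        ∂(Measure.pi fun _ => Measure.pi fun _ => gaussianReal 0 1))
      = (∫ x, Real.exp (t * x ^ 2) ∂(gaussianReal 0 1)) ^ m ∧
    Integrable (fun D : Fin m → Fin d → ℝ => Real.exp (t * ∑ j, (D j i) ^ 2))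
      (Measure.pi fun _ => Measure.pi fun _ => gaussianReal 0 1) := by
  letI : MeasureSpace ℝ := { volume := gaussianReal 0 1 }
  have hvol : (volume : Measure ℝ) = gaussianReal 0 1 := rfl
  have hP : (volume : Measure (Fin m → Fin d → ℝ))
      = Measure.pi fun _ => Measure.pi fun _ => gaussianReal 0 1 := rfl
  haveI hprob : IsProbabilityMeasure (volume : Measure ℝ) := by
    rw [hvol]; infer_instance
  set g : Fin d → ℝ → ℝ := fun i' x => if i' = i then Real.exp (t * x ^ 2) else 1 with hg
  have hgprod : ∀ w : Fin d → ℝ, ∏ i', g i' (w i') = Real.exp (t * (w i) ^ 2) := by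
    intro w
    rw [hg]
    simp [Finset.prod_ite_eq]
  have hgint : ∀ i', Integrable (g i') volume := by
    intro i'
    rw [hg, hvol]
    by_cases h : i' = i <;> simp [h, hInt]
  have hfun : (fun D : Fin m → Fin d → ℝ => Real.exp (t * ∑ j, (D j i) ^ 2))
      = fun D => ∏ j, ∏ i', g i' (D j i') := by
    ext D
    simp_rw [hgprod]
    rw [← Real.exp_sum]
    congr 1
    rw [Finset.mul_sum]
  constructor
  · rw [← hP, hfun]
    have := MeasureTheory.integral_fintype_prod_eq_pow (ι := Fin m) (μ := volume)
      (fun w : Fin d → ℝ => ∏ i', g i' (w i'))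
    simp only [Fintype.card_fin] at this
    rw [volume_pi, this, volume_pi, MeasureTheory.integral_fintype_prod_eq_prod (ι := Fin d) g (μ := fun _ => volume)]
    congr 1
    rw [Finset.prod_eq_single i]
    · rw [hg]; simp [hvol]
    · intro b _ hb; rw [hg]; simp [hb, hvol]
    · simp
  · rw [← hP, hfun]
    exact Integrable.fintype_prod
      (f := fun _ : Fin m => fun w : Fin d → ℝ => ∏ i', g i' (w i'))
      (fun _ => Integrable.fintype_prod (f := g) hgint)

lemma log_add_le (u : ℝ) (h0 : 0 ≤ u) (h1 : u ≤ 1) :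
    Real.log (1 + u) ≤ u - u ^ 2 / 8 := by
  obtain ⟨x, hx⟩ : ∃ x, x = u - u ^ 2 / 8 := ⟨_, rfl⟩
  have hx0 : 0 ≤ x := by rw [hx]; nlinarith
  have h2 : 1 + x / 2 ≤ Real.exp (x / 2) := by linarith [Real.add_one_le_exp (x / 2)]
  have h3 : (1 + x / 2) ^ 2 ≤ Real.exp (x / 2) ^ 2 :=
    pow_le_pow_left₀ (by linarith [hx0]) h2 2
  have h4 : Real.exp (x / 2) ^ 2 = Real.exp x := by
    rw [sq, ← Real.exp_add]; ring_nf
  have h5 : 1 + u ≤ (1 + x / 2) ^ 2 := by rw [hx]; nlinarith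
  rw [Real.log_le_iff_le_exp (by linarith)]
  calc 1 + u ≤ (1 + x/2)^2 := h5
    _ ≤ Real.exp (x/2)^2 := h3
    _ = Real.exp x := h4
    _ = Real.exp (u - u ^ 2 / 8) := by rw [hx]

lemma sqrt_pow_eq_exp {a : ℝ} (ha : 0 < a) (n : ℕ) :
    (Real.sqrt a)⁻¹ ^ n = Real.exp (-((n : ℝ) / 2) * Real.log a) := by
  have h1 : (0:ℝ) < (Real.sqrt a)⁻¹ ^ n := by positivity
  rw [← Real.exp_log h1, Real.log_pow, Real.log_inv, Real.log_sqrt ha.le]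
  ring_nf

lemma tail_hi (ε : ℝ) (hε : ε ∈ Set.Ioo (0:ℝ) (1/2)) (i : Fin d) :
    ((Measure.pi fun _ : Fin m => Measure.pi fun _ : Fin d => gaussianReal 0 1)
      {D | (m:ℝ) * (1 + 2*ε) ≤ ∑ j, (D j i)^2}).toReal ≤ Real.exp (-(m:ℝ) * ε^2 / 4) := by
  obtain ⟨hε0, hε2⟩ := hε
  have ha : (0:ℝ) < 1 + 2*ε := by linarith
  have ht0 : 0 ≤ ε / (1 + 2*ε) := by positivity
  have ht : ε / (1 + 2*ε) < 1/2 := by rw [div_lt_iff₀ ha]; linarith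
  obtain ⟨hval, hint⟩ := pi_exp_integral (m := m) (ε / (1 + 2*ε)) i
    (integrable_exp_mul_sq_gaussian ht)
  have hch := measure_ge_le_exp_mul_mgf (X := fun D : Fin m → Fin d → ℝ => ∑ j, (D j i)^2)
    (μ := Measure.pi fun _ => Measure.pi fun _ => gaussianReal 0 1)
    (t := ε / (1 + 2*ε)) ((m:ℝ) * (1 + 2*ε)) ht0 hint
  refine hch.trans ?_
  have hmgf : mgf (fun D : Fin m → Fin d → ℝ => ∑ j, (D j i)^2)
      (Measure.pi fun _ => Measure.pi fun _ => gaussianReal 0 1) (ε / (1 + 2*ε))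
      = (Real.sqrt (1 - 2 * (ε / (1 + 2*ε))))⁻¹ ^ m := by
    rw [mgf, hval, integral_exp_mul_sq_gaussian ht]
  rw [hmgf]
  have h12t : 1 - 2 * (ε / (1 + 2*ε)) = (1 + 2*ε)⁻¹ := by
    field_simp
    ring
  rw [h12t, sqrt_pow_eq_exp (by positivity), Real.log_inv, ← Real.exp_add]
  apply Real.exp_le_exp.mpr
  have htc : -(ε / (1 + 2*ε)) * ((m:ℝ) * (1 + 2*ε)) = -((m:ℝ) * ε) := by
    field_simp
  rw [htc]
  have hlog := log_add_le (2*ε) (by linarith) (by linarith)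
  have hm0 : (0:ℝ) ≤ (m:ℝ) := Nat.cast_nonneg m
  nlinarith [hlog, hm0]

lemma tail_lo (ε : ℝ) (hε : ε ∈ Set.Ioo (0:ℝ) (1/2)) (i : Fin d) :
    ((Measure.pi fun _ : Fin m => Measure.pi fun _ : Fin d => gaussianReal 0 1)
      {D | ∑ j, (D j i)^2 ≤ (m:ℝ) * (1 - ε)^2}).toReal ≤ Real.exp (-(m:ℝ) * ε^2 / 4) := by
  obtain ⟨hε0, hε2⟩ := hε
  have hb : (0:ℝ) < (1 - ε)^2 := by nlinarith
  have hb1 : (1 - ε)^2 ≤ 1 := by nlinarith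
  have ht1 : -((1 - (1-ε)^2) / (2 * (1-ε)^2)) ≤ 0 := by
    apply neg_nonpos.mpr
    apply div_nonneg (by nlinarith) (by positivity)
  have ht : -((1 - (1-ε)^2) / (2 * (1-ε)^2)) < 1/2 := by linarith
  obtain ⟨hval, hint⟩ := pi_exp_integral (m := m) (-((1 - (1-ε)^2) / (2 * (1-ε)^2))) i
    (integrable_exp_mul_sq_gaussian ht)
  have hch := measure_le_le_exp_mul_mgf (X := fun D : Fin m → Fin d → ℝ => ∑ j, (D j i)^2)
    (μ := Measure.pi fun _ => Measure.pi fun _ => gaussianReal 0 1)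
    (t := -((1 - (1-ε)^2) / (2 * (1-ε)^2))) ((m:ℝ) * (1 - ε)^2) ht1 hint
  refine hch.trans ?_
  have hmgf : mgf (fun D : Fin m → Fin d → ℝ => ∑ j, (D j i)^2)
      (Measure.pi fun _ => Measure.pi fun _ => gaussianReal 0 1)
      (-((1 - (1-ε)^2) / (2 * (1-ε)^2)))
      = (Real.sqrt (1 - 2 * (-((1 - (1-ε)^2) / (2 * (1-ε)^2)))))⁻¹ ^ m := by
    rw [mgf, hval, integral_exp_mul_sq_gaussian ht]
  rw [hmgf]
  have h12t : 1 - 2 * (-((1 - (1-ε)^2) / (2 * (1-ε)^2))) = ((1-ε)^2)⁻¹ := by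
    field_simp
    rw [sub_neg_eq_add, one_add_div hb.ne', add_sub_cancel, one_div]
  rw [h12t, sqrt_pow_eq_exp (by positivity), Real.log_inv, ← Real.exp_add]
  apply Real.exp_le_exp.mpr
  have htc : -(-((1 - (1-ε)^2) / (2 * (1-ε)^2))) * ((m:ℝ) * (1 - ε)^2) = (m:ℝ) * (1 - (1-ε)^2) / 2 := by
    have hne : (1:ℝ) - ε ≠ 0 := by linarith
    field_simp
  rw [htc]
  have hlog : Real.log ((1-ε)^2) ≤ -(2*ε) := by
    have h1 : Real.log (1 - ε) ≤ -ε := by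
      have := Real.log_le_sub_one_of_pos (show (0:ℝ) < 1 - ε by linarith)
      linarith
    calc Real.log ((1-ε)^2) = 2 * Real.log (1-ε) := by
          rw [Real.log_pow]; norm_num
      _ ≤ -(2*ε) := by linarith
  have hm0 : (0:ℝ) ≤ (m:ℝ) := Nat.cast_nonneg m
  nlinarith [hlog, hm0]

lemma good_measure (ε δ : ℝ) (hε : ε ∈ Set.Ioo (0:ℝ) (1/2)) (hδ0 : 0 ≤ δ) (hδ1 : δ ≤ 1)
    (he : Real.exp (-(m:ℝ) * ε^2 / 4) * (2 * d) ≤ δ) :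
    ENNReal.ofReal (1 - δ) ≤
      (Measure.pi fun _ : Fin m => Measure.pi fun _ : Fin d => gaussianReal 0 1)
        (⋂ i : Fin d, {D | (m:ℝ) * (1-ε)^2 ≤ ∑ j, (D j i)^2 ∧ ∑ j, (D j i)^2 ≤ (m:ℝ) * (1+2*ε)}) := by
  set μ := (Measure.pi fun _ : Fin m => Measure.pi fun _ : Fin d => gaussianReal 0 1) with hμ
  have hXm : ∀ i : Fin d, Measurable (fun D : Fin m → Fin d → ℝ => ∑ j, (D j i)^2) := by
    intro i
    exact Finset.measurable_sum _ fun j _ =>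
      (((measurable_pi_apply i).comp (measurable_pi_apply j)).pow_const 2)
  have hTm : ∀ i : Fin d, MeasurableSet
      {D : Fin m → Fin d → ℝ | (m:ℝ) * (1-ε)^2 ≤ ∑ j, (D j i)^2 ∧ ∑ j, (D j i)^2 ≤ (m:ℝ) * (1+2*ε)} := by
    intro i
    exact (measurableSet_le measurable_const (hXm i)).inter
      (measurableSet_le (hXm i) measurable_const)
  have hG : MeasurableSet (⋂ i : Fin d,
      {D : Fin m → Fin d → ℝ | (m:ℝ) * (1-ε)^2 ≤ ∑ j, (D j i)^2 ∧ ∑ j, (D j i)^2 ≤ (m:ℝ) * (1+2*ε)}) :=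
    MeasurableSet.iInter fun i => hTm i
  have e_nonneg : (0:ℝ) ≤ Real.exp (-(m:ℝ) * ε^2 / 4) := (Real.exp_pos _).le
  have hcompl : μ (⋂ i : Fin d,
      {D : Fin m → Fin d → ℝ | (m:ℝ) * (1-ε)^2 ≤ ∑ j, (D j i)^2 ∧ ∑ j, (D j i)^2 ≤ (m:ℝ) * (1+2*ε)})ᶜ
      ≤ ENNReal.ofReal δ := by
    rw [Set.compl_iInter]
    refine (measure_iUnion_fintype_le μ _).trans ?_
    have hone : ∀ i : Fin d, μ ({D : Fin m → Fin d → ℝ |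
        (m:ℝ) * (1-ε)^2 ≤ ∑ j, (D j i)^2 ∧ ∑ j, (D j i)^2 ≤ (m:ℝ) * (1+2*ε)}ᶜ)
        ≤ ENNReal.ofReal (2 * Real.exp (-(m:ℝ) * ε^2 / 4)) := by
      intro i
      have hsub : {D : Fin m → Fin d → ℝ |
          (m:ℝ) * (1-ε)^2 ≤ ∑ j, (D j i)^2 ∧ ∑ j, (D j i)^2 ≤ (m:ℝ) * (1+2*ε)}ᶜ ⊆
          {D : Fin m → Fin d → ℝ | ∑ j, (D j i)^2 ≤ (m:ℝ) * (1-ε)^2} ∪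
          {D : Fin m → Fin d → ℝ | (m:ℝ) * (1+2*ε) ≤ ∑ j, (D j i)^2} := by
        intro D hD
        simp only [Set.mem_compl_iff, Set.mem_setOf_eq, not_and_or, not_le] at hD
        rcases hD with h | h
        · exact Or.inl h.le
        · exact Or.inr h.le
      refine (measure_mono hsub).trans ?_
      refine (measure_union_le _ _).trans ?_
      have hlo : μ {D : Fin m → Fin d → ℝ | ∑ j, (D j i)^2 ≤ (m:ℝ) * (1-ε)^2}
          ≤ ENNReal.ofReal (Real.exp (-(m:ℝ) * ε^2 / 4)) := by
        rw [ENNReal.le_ofReal_iff_toReal_le (measure_ne_top μ _) e_nonneg]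
        exact tail_lo ε hε i
      have hhi : μ {D : Fin m → Fin d → ℝ | (m:ℝ) * (1+2*ε) ≤ ∑ j, (D j i)^2}
          ≤ ENNReal.ofReal (Real.exp (-(m:ℝ) * ε^2 / 4)) := by
        rw [ENNReal.le_ofReal_iff_toReal_le (measure_ne_top μ _) e_nonneg]
        exact tail_hi ε hε i
      calc μ _ + μ _ ≤ ENNReal.ofReal (Real.exp (-(m:ℝ) * ε^2 / 4))
            + ENNReal.ofReal (Real.exp (-(m:ℝ) * ε^2 / 4)) := add_le_add hlo hhi
        _ = ENNReal.ofReal (2 * Real.exp (-(m:ℝ) * ε^2 / 4)) := by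
            rw [← ENNReal.ofReal_add e_nonneg e_nonneg]; ring_nf
    refine (Finset.sum_le_sum fun i _ => hone i).trans ?_
    rw [Finset.sum_const, Finset.card_univ, Fintype.card_fin, nsmul_eq_mul,
      ← ENNReal.ofReal_natCast d, ← ENNReal.ofReal_mul (Nat.cast_nonneg d)]
    apply ENNReal.ofReal_le_ofReal
    calc (d:ℝ) * (2 * Real.exp (-(m:ℝ) * ε^2 / 4))
        = Real.exp (-(m:ℝ) * ε^2 / 4) * (2 * d) := by ring
      _ ≤ δ := he
  haveI : IsProbabilityMeasure μ := by
    rw [hμ]; infer_instance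
  rw [← compl_compl (⋂ i : Fin d,
    {D : Fin m → Fin d → ℝ | (m:ℝ) * (1-ε)^2 ≤ ∑ j, (D j i)^2 ∧ ∑ j, (D j i)^2 ≤ (m:ℝ) * (1+2*ε)}),
    prob_compl_eq_one_sub hG.compl]
  calc ENNReal.ofReal (1 - δ) ≤ 1 - ENNReal.ofReal δ := by
        apply ENNReal.le_sub_of_add_le_left ENNReal.ofReal_ne_top
        rw [← ENNReal.ofReal_add hδ0 (by linarith)]
        norm_num
    _ ≤ 1 - μ _ := tsub_le_tsub_left hcompl 1

lemma good_implies (ℓ m : ℕ) (hm1 : 1 ≤ m) (ε : ℝ) (hε0 : 0 ≤ ε) (hε1 : ε ≤ 1)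
    (D : Fin m → Fin (2 ^ ℓ) → ℝ)
    (hD : ∀ i, (m:ℝ) * (1-ε)^2 ≤ ∑ j, (D j i)^2 ∧ ∑ j, (D j i)^2 ≤ (m:ℝ) * (1+2*ε))
    (x y : EuclideanSpace ℝ (Fin (2 ^ ℓ))) :
    (1 - ε) * ‖x - y‖ ≤
        Real.sqrt (∑ j, ∑ k, (rht ℓ m D x j k - rht ℓ m D y j k) ^ 2) /
          Real.sqrt ((m : ℝ) * 2 ^ ℓ) ∧
      Real.sqrt (∑ j, ∑ k, (rht ℓ m D x j k - rht ℓ m D y j k) ^ 2) /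
          Real.sqrt ((m : ℝ) * 2 ^ ℓ) ≤ (1 + ε) * ‖x - y‖ := by
  have hdiff : ∀ j k, rht ℓ m D x j k - rht ℓ m D y j k
      = (Had ℓ).mulVec (fun i => D j i * (x i - y i)) k := by
    intro j k
    rw [rht, rht]
    have h1 : (Had ℓ).mulVec (fun i => D j i * x i) k - (Had ℓ).mulVec (fun i => D j i * y i) k
        = ((Had ℓ).mulVec ((fun i => D j i * x i) - fun i => D j i * y i)) k := by
      rw [Matrix.mulVec_sub]; rfl
    rw [h1]
    congr 1
    ext i
    simp [mul_sub]
  have hT : ∑ j, ∑ k, (rht ℓ m D x j k - rht ℓ m D y j k) ^ 2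
      = 2 ^ ℓ * ∑ i, (∑ j, (D j i)^2) * (x i - y i) ^ 2 := by
    simp_rw [hdiff, sum_sq_mulVec, ← Finset.mul_sum]
    congr 1
    rw [Finset.sum_comm]
    apply Finset.sum_congr rfl
    intro i _
    rw [Finset.sum_mul]
    apply Finset.sum_congr rfl
    intro j _
    ring
  set Z := ∑ i, (x i - y i) ^ 2 with hZ
  have hZ0 : 0 ≤ Z := Finset.sum_nonneg fun i _ => sq_nonneg _
  have hnorm : ‖x - y‖ = Real.sqrt Z := by
    rw [EuclideanSpace.norm_eq, hZ]
    congr 1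
    apply Finset.sum_congr rfl
    intro i _
    rw [Real.norm_eq_abs, sq_abs]
    rfl
  have hTlo : (m:ℝ) * 2 ^ ℓ * ((1-ε)^2 * Z) ≤ ∑ j, ∑ k, (rht ℓ m D x j k - rht ℓ m D y j k) ^ 2 := by
    rw [hT]
    have : ∀ i ∈ Finset.univ, (m:ℝ) * (1-ε)^2 * (x i - y i)^2 ≤ (∑ j, (D j i)^2) * (x i - y i)^2 :=
      fun i _ => mul_le_mul_of_nonneg_right (hD i).1 (sq_nonneg _)
    calc (m:ℝ) * 2 ^ ℓ * ((1-ε)^2 * Z) = 2 ^ ℓ * ∑ i, (m:ℝ) * (1-ε)^2 * (x i - y i)^2 := by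
          simp only [hZ, Finset.mul_sum]
          apply Finset.sum_congr rfl; intro i _; ring
      _ ≤ 2 ^ ℓ * ∑ i, (∑ j, (D j i)^2) * (x i - y i)^2 :=
          mul_le_mul_of_nonneg_left (Finset.sum_le_sum this) (by positivity)
  have hThi : ∑ j, ∑ k, (rht ℓ m D x j k - rht ℓ m D y j k) ^ 2
      ≤ (m:ℝ) * 2 ^ ℓ * ((1+ε)^2 * Z) := by
    rw [hT]
    have key : ∀ i ∈ Finset.univ, (∑ j, (D j i)^2) * (x i - y i)^2 ≤ (m:ℝ) * (1+ε)^2 * (x i - y i)^2 := by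
      intro i _
      apply mul_le_mul_of_nonneg_right _ (sq_nonneg _)
      refine (hD i).2.trans ?_
      have : (1:ℝ) + 2*ε ≤ (1+ε)^2 := by nlinarith
      exact mul_le_mul_of_nonneg_left this (Nat.cast_nonneg m)
    calc 2 ^ ℓ * ∑ i, (∑ j, (D j i)^2) * (x i - y i)^2
        ≤ 2 ^ ℓ * ∑ i, (m:ℝ) * (1+ε)^2 * (x i - y i)^2 :=
          mul_le_mul_of_nonneg_left (Finset.sum_le_sum key) (by positivity)
      _ = (m:ℝ) * 2 ^ ℓ * ((1+ε)^2 * Z) := by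
          simp only [hZ, Finset.mul_sum]
          apply Finset.sum_congr rfl; intro i _; ring
  have hm0 : (0:ℝ) < (m:ℝ) := by exact_mod_cast hm1
  have hs : (0:ℝ) < (m:ℝ) * 2 ^ ℓ := by positivity
  have hss : (0:ℝ) < Real.sqrt ((m:ℝ) * 2 ^ ℓ) := Real.sqrt_pos.mpr hs
  have sqrt_fac : ∀ c : ℝ, 0 ≤ c → Real.sqrt ((m:ℝ) * 2 ^ ℓ * (c^2 * Z))
      = Real.sqrt ((m:ℝ) * 2 ^ ℓ) * (c * Real.sqrt Z) := by
    intro c hc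
    rw [Real.sqrt_mul hs.le, Real.sqrt_mul (sq_nonneg c), Real.sqrt_sq hc]
  constructor
  · rw [hnorm, le_div_iff₀ hss]
    calc (1 - ε) * Real.sqrt Z * Real.sqrt ((m:ℝ) * 2 ^ ℓ)
        = Real.sqrt ((m:ℝ) * 2 ^ ℓ) * ((1 - ε) * Real.sqrt Z) := by ring
      _ = Real.sqrt ((m:ℝ) * 2 ^ ℓ * ((1-ε)^2 * Z)) := (sqrt_fac (1-ε) (by linarith)).symm
      _ ≤ Real.sqrt (∑ j, ∑ k, (rht ℓ m D x j k - rht ℓ m D y j k) ^ 2) :=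
          Real.sqrt_le_sqrt hTlo
  · rw [hnorm, div_le_iff₀ hss]
    calc Real.sqrt (∑ j, ∑ k, (rht ℓ m D x j k - rht ℓ m D y j k) ^ 2)
        ≤ Real.sqrt ((m:ℝ) * 2 ^ ℓ * ((1+ε)^2 * Z)) := Real.sqrt_le_sqrt hThi
      _ = Real.sqrt ((m:ℝ) * 2 ^ ℓ) * ((1 + ε) * Real.sqrt Z) := sqrt_fac (1+ε) (by linarith)
      _ = (1 + ε) * Real.sqrt Z * Real.sqrt ((m:ℝ) * 2 ^ ℓ) := by ring

/-- Lemma B.5: the randomized Hadamard transform is a uniform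
near-isometry. -/
theorem rht_near_isometry (ℓ : ℕ) (ε δ : ℝ) (hε : ε ∈ Set.Ioo (0 : ℝ) (1 / 2))
    (hδ : δ ∈ Set.Ioo (0 : ℝ) (1 / 2)) (m : ℕ)
    (hm : 4 * (Real.log (2 ^ ℓ) + Real.log (2 / δ)) / ε ^ 2 ≤ (m : ℝ)) :
    ENNReal.ofReal (1 - δ) ≤
      diagMeasure ℓ m
        {D | ∀ x y : EuclideanSpace ℝ (Fin (2 ^ ℓ)),
          (1 - ε) * ‖x - y‖ ≤
              Real.sqrt (∑ j, ∑ k, (rht ℓ m D x j k - rht ℓ m D y j k) ^ 2) /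
                Real.sqrt ((m : ℝ) * 2 ^ ℓ) ∧
            Real.sqrt (∑ j, ∑ k, (rht ℓ m D x j k - rht ℓ m D y j k) ^ 2) /
                Real.sqrt ((m : ℝ) * 2 ^ ℓ) ≤ (1 + ε) * ‖x - y‖} := by
  obtain ⟨hε0, hε2⟩ := hε
  obtain ⟨hδ0, hδ2⟩ := hδ
  have hd1 : (1:ℝ) ≤ (2:ℝ) ^ ℓ := one_le_pow₀ (by norm_num)
  have hlogd : 0 ≤ Real.log ((2:ℝ) ^ ℓ) := Real.log_nonneg hd1
  have h2δ : 1 < 2 / δ := by rw [lt_div_iff₀ hδ0]; linarith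
  have hlog2δ : 0 < Real.log (2 / δ) := Real.log_pos h2δ
  have hmpos : (0:ℝ) < (m:ℝ) := lt_of_lt_of_le (by positivity) hm
  have hm1 : 1 ≤ m := Nat.cast_pos.mp hmpos
  have hεle : ε ≤ 1 := by linarith
  have hδ1 : δ ≤ 1 := by linarith
  have hkey : Real.exp (-(m:ℝ) * ε ^ 2 / 4) * (2 * ((2 ^ ℓ : ℕ) : ℝ)) ≤ δ := by
    have hε2pos : (0:ℝ) < ε ^ 2 := by positivity
    have h1 : 4 * (Real.log ((2:ℝ) ^ ℓ) + Real.log (2 / δ)) ≤ (m:ℝ) * ε ^ 2 := by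
      rw [div_le_iff₀ hε2pos] at hm
      linarith
    have h2 : -(m:ℝ) * ε ^ 2 / 4 ≤ -(Real.log ((2:ℝ) ^ ℓ) + Real.log (2 / δ)) := by
      linarith
    have h3 : Real.exp (-(m:ℝ) * ε ^ 2 / 4) ≤ ((2:ℝ) ^ ℓ)⁻¹ * (δ / 2) := by
      refine (Real.exp_le_exp.mpr h2).trans_eq ?_
      rw [neg_add, Real.exp_add, Real.exp_neg, Real.exp_neg,
        Real.exp_log (by positivity), Real.exp_log (by positivity), inv_div]
    have hcast : ((2 ^ ℓ : ℕ) : ℝ) = (2:ℝ) ^ ℓ := by push_cast; ring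
    rw [hcast]
    calc Real.exp (-(m:ℝ) * ε ^ 2 / 4) * (2 * (2:ℝ) ^ ℓ)
        ≤ ((2:ℝ) ^ ℓ)⁻¹ * (δ / 2) * (2 * (2:ℝ) ^ ℓ) :=
          mul_le_mul_of_nonneg_right h3 (by positivity)
      _ = δ := by
          field_simp
  have hgm := good_measure (m := m) (d := 2 ^ ℓ) ε δ ⟨hε0, hε2⟩ hδ0.le hδ1 hkey
  rw [diagMeasure]
  refine hgm.trans (measure_mono ?_)
  intro D hD
  simp only [Set.mem_iInter, Set.mem_setOf_eq] at hD
  intro x y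
  exact good_implies ℓ m hm1 ε hε0.le hεle D hD x y
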